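/- Let A be an n×n real symmetric positive definite matrix, Φ an n×N matrix with full column rank, U an n×(n−N) matrix with full column rank satisfying ΦᵀU = 0, and Ψ = A⁻¹Φ(ΦᵀA⁻¹Φ)⁻¹. Then UᵀAΨ = 0, the n×n matrix [U Ψ] is invertible, and A⁻¹ = U(UᵀAU)⁻¹Uᵀ + Ψ(ΨᵀAΨ)⁻¹Ψᵀ. -/

import Mathlib

open Matrix BigOperators

noncomputable section

/-- Euclidean norm of a vector. -/
def norm2 {ι : Type} [Fintype ι] (x : ι → ℝ) : ℝ := Real.sqrt (x ⬝ᵥ x)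

/-- `A`-energy norm of a vector: `‖x‖_A = √(xᵀ A x)`. -/
def normA {ι : Type} [Fintype ι] (A : Matrix ι ι ℝ) (x : ι → ℝ) : ℝ :=
  Real.sqrt (x ⬝ᵥ A.mulVec x)

/-- Spectral (ℓ²-operator) norm of a square real matrix. -/
def specNorm {ι : Type} [Fintype ι] [DecidableEq ι] (B : Matrix ι ι ℝ) : ℝ :=
  ‖Matrix.toEuclideanCLM (𝕜 := ℝ) B‖

/-- Smallest value of the Rayleigh quotient; for a symmetric matrix this is the
smallest eigenvalue. -/
def lamMin {ι : Type} [Fintype ι] (B : Matrix ι ι ℝ) : ℝ :=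
  sInf {r : ℝ | ∃ x : ι → ℝ, x ⬝ᵥ x = 1 ∧ r = x ⬝ᵥ B.mulVec x}

/-- Largest value of the Rayleigh quotient; for a symmetric matrix this is the
largest eigenvalue. -/
def lamMax {ι : Type} [Fintype ι] (B : Matrix ι ι ℝ) : ℝ :=
  sSup {r : ℝ | ∃ x : ι → ℝ, x ⬝ᵥ x = 1 ∧ r = x ⬝ᵥ B.mulVec x}

lemma aux_posdef_conj {n m : ℕ} {A : Matrix (Fin n) (Fin n) ℝ} (hA : A.PosDef)
    (C : Matrix (Fin n) (Fin m) ℝ) (hC : Function.Injective C.mulVec) :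
    (Cᵀ * A * C).PosDef := by
  have hCt : Cᵀ = Cᴴ := by
    ext i j; simp [Matrix.conjTranspose_apply]
  rw [Matrix.posDef_iff_dotProduct_mulVec]
  constructor
  · rw [hCt]
    exact Matrix.isHermitian_conjTranspose_mul_mul C hA.1
  · intro x hx
    have hCx : C *ᵥ x ≠ 0 := by
      intro h
      exact hx (hC (by simpa using h))
    have key : star x ⬝ᵥ (Cᵀ * A * C) *ᵥ x = star (C *ᵥ x) ⬝ᵥ A *ᵥ (C *ᵥ x) := by
      have hsx : star x = x := by funext i; simp
      have hsCx : star (C *ᵥ x) = C *ᵥ x := by funext i; simp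
      rw [hsx, hsCx, ← Matrix.mulVec_mulVec, ← Matrix.mulVec_mulVec,
        Matrix.dotProduct_mulVec, Matrix.vecMul_transpose]
    rw [key]
    exact hA.dotProduct_mulVec_pos hCx

theorem one_level_operator_decomposition {n N : ℕ}
    (A : Matrix (Fin n) (Fin n) ℝ) (hA : A.PosDef)
    (Φ : Matrix (Fin n) (Fin N) ℝ)
    (hΦind : LinearIndependent ℝ (fun i : Fin N => Φᵀ i))
    (U : Matrix (Fin n) (Fin (n - N)) ℝ)
    (hUind : LinearIndependent ℝ (fun i : Fin (n - N) => Uᵀ i))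
    (hΦU : Φᵀ * U = 0)
    (Ψ : Matrix (Fin n) (Fin N) ℝ)
    (hΨ : Ψ = A⁻¹ * Φ * (Φᵀ * A⁻¹ * Φ)⁻¹) :
    Uᵀ * A * Ψ = 0 ∧
    Function.Bijective (Matrix.mulVecLin (Matrix.fromCols U Ψ)) ∧
    A⁻¹ = U * (Uᵀ * A * U)⁻¹ * Uᵀ + Ψ * (Ψᵀ * A * Ψ)⁻¹ * Ψᵀ := by
  have hAT : Aᵀ = A := by
    conv_rhs => rw [← hA.1]
    ext i j; simp [Matrix.conjTranspose_apply]
  have hAinv : (A⁻¹).PosDef := hA.inv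
  have hAiT : A⁻¹ᵀ = A⁻¹ := by rw [Matrix.transpose_nonsing_inv, hAT]
  have hΦinj : Function.Injective Φ.mulVec := Matrix.mulVec_injective_iff.mpr hΦind
  have hUinj : Function.Injective U.mulVec := Matrix.mulVec_injective_iff.mpr hUind
  set M := Φᵀ * A⁻¹ * Φ with hMdef
  set K := Uᵀ * A * U with hKdef
  have hM : M.PosDef := aux_posdef_conj hAinv Φ hΦinj
  have hK : K.PosDef := aux_posdef_conj hA U hUinj
  have hAdet : IsUnit A.det := (Matrix.isUnit_iff_isUnit_det A).mp hA.isUnit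
  have hMdet : IsUnit M.det := (Matrix.isUnit_iff_isUnit_det M).mp hM.isUnit
  have hKdet : IsUnit K.det := (Matrix.isUnit_iff_isUnit_det K).mp hK.isUnit
  have hMT : Mᵀ = M := by
    rw [hMdef]; simp [Matrix.transpose_mul, hAiT, Matrix.mul_assoc]
  have hMiT : M⁻¹ᵀ = M⁻¹ := by rw [Matrix.transpose_nonsing_inv, hMT]
  have hΨT : Ψᵀ = M⁻¹ * Φᵀ * A⁻¹ := by
    rw [hΨ]; simp [Matrix.transpose_mul, hAiT, hMiT, Matrix.mul_assoc]
  have hΨA : Ψᵀ * A = M⁻¹ * Φᵀ := by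
    rw [hΨT, Matrix.mul_assoc, Matrix.nonsing_inv_mul A hAdet, Matrix.mul_one]
  have hΨAU : Ψᵀ * A * U = 0 := by
    rw [hΨA, Matrix.mul_assoc, hΦU, Matrix.mul_zero]
  have hUAΨ : Uᵀ * A * Ψ = 0 := by
    have := congrArg Matrix.transpose hΨAU
    simpa [Matrix.transpose_mul, hAT, Matrix.mul_assoc] using this
  have hΦΨ : Φᵀ * Ψ = 1 := by
    rw [hΨ, ← Matrix.mul_assoc, ← Matrix.mul_assoc, ← hMdef]
    exact Matrix.mul_nonsing_inv M hMdet
  have hΨAΨ : Ψᵀ * A * Ψ = M⁻¹ := by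
    rw [hΨA, Matrix.mul_assoc, hΦΨ, Matrix.mul_one]
  -- right-associated versions
  have hUAU' : Uᵀ * (A * U) = K := by rw [← Matrix.mul_assoc]
  have hUAΨ' : Uᵀ * (A * Ψ) = 0 := by rw [← Matrix.mul_assoc]; exact hUAΨ
  have hΨAU' : Ψᵀ * (A * U) = 0 := by rw [← Matrix.mul_assoc]; exact hΨAU
  have hΨAΨ' : Ψᵀ * (A * Ψ) = M⁻¹ := by rw [← Matrix.mul_assoc]; exact hΨAΨ
  have hNn : N ≤ n := by simpa using hΦind.fintype_card_le_finrank
  have e : Fin n ≃ (Fin (n - N) ⊕ Fin N) :=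
    Fintype.equivOfCardEq (by simp [Nat.sub_add_cancel hNn])
  set C := Matrix.fromCols U Ψ with hCdef
  set B := Matrix.fromRows (K⁻¹ * Uᵀ * A) Φᵀ with hBdef
  have hBC : B * C = 1 := by
    rw [hBdef, hCdef, Matrix.fromRows_mul_fromCols]
    have h11 : K⁻¹ * Uᵀ * A * U = 1 := by
      rw [Matrix.mul_assoc K⁻¹, Matrix.mul_assoc K⁻¹, ← hKdef,
        Matrix.nonsing_inv_mul K hKdet]
    have h12 : K⁻¹ * Uᵀ * A * Ψ = 0 := by
      rw [Matrix.mul_assoc K⁻¹, Matrix.mul_assoc K⁻¹, hUAΨ, Matrix.mul_zero]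
    rw [h11, h12, hΦU, hΦΨ, Matrix.fromBlocks_one]
  have hCB : C * B = 1 :=
    (Matrix.fromCols_mul_fromRows_eq_one_comm e U Ψ (K⁻¹ * Uᵀ * A) Φᵀ).mpr hBC
  have hinv2 : (Ψᵀ * A * Ψ)⁻¹ = M := by
    rw [hΨAΨ, Matrix.nonsing_inv_nonsing_inv M hMdet]
  have hXA : (U * K⁻¹ * Uᵀ + Ψ * (Ψᵀ * A * Ψ)⁻¹ * Ψᵀ) * A = 1 := by
    have h1 : (U * K⁻¹ * Uᵀ + Ψ * (Ψᵀ * A * Ψ)⁻¹ * Ψᵀ) * A * C = C := by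
      rw [hinv2, hCdef, Matrix.mul_fromCols]
      simp only [Matrix.add_mul, Matrix.mul_assoc, hUAU', hUAΨ', hΨAU', hΨAΨ',
        Matrix.nonsing_inv_mul K hKdet, Matrix.mul_nonsing_inv M hMdet,
        Matrix.mul_one, Matrix.mul_zero, add_zero, zero_add]
    calc (U * K⁻¹ * Uᵀ + Ψ * (Ψᵀ * A * Ψ)⁻¹ * Ψᵀ) * A
        = (U * K⁻¹ * Uᵀ + Ψ * (Ψᵀ * A * Ψ)⁻¹ * Ψᵀ) * A * (C * B) := by
          rw [hCB, Matrix.mul_one]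
      _ = ((U * K⁻¹ * Uᵀ + Ψ * (Ψᵀ * A * Ψ)⁻¹ * Ψᵀ) * A * C) * B := by
          simp only [Matrix.mul_assoc]
      _ = C * B := by rw [h1]
      _ = 1 := hCB
  refine ⟨hUAΨ, ?_, Matrix.inv_eq_left_inv hXA⟩
  have hbij : Function.LeftInverse (Matrix.mulVecLin B) (Matrix.mulVecLin C) ∧
      Function.RightInverse (Matrix.mulVecLin B) (Matrix.mulVecLin C) := by
    constructor
    · intro v
      simp [Matrix.mulVecLin_apply, Matrix.mulVec_mulVec, hBC]
    · intro v
      simp [Matrix.mulVecLin_apply, Matrix.mulVec_mulVec, hCB]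
  exact Function.bijective_iff_has_inverse.mpr ⟨Matrix.mulVecLin B, hbij.1, hbij.2⟩

end
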